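/- Let A be a PID, x ∈ A a nonzero nonunit, p a prime element of A dividing x, and S an A-order in a degree N field extension K of the fraction field F of A. Set R = A + xS and 𝔭 = pA + xS. If 𝔮 is any prime ideal of R with 𝔮 ∩ A = (p), then 𝔮 = 𝔭. -/

import Mathlib

/-- With `R = A + xS` and `𝔭 = pA + xS` as before, any prime ideal `𝔮` of `R` with
`𝔮 ∩ A = (p)` equals `𝔭`. -/
theorem order_A_plus_xS_unique_prime_over (A F K : Type*) [CommRing A] [IsDomain A]
    [IsPrincipalIdealRing A] [Field F] [Algebra A F] [IsFractionRing A F]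
    [Field K] [Algebra F K] [Algebra A K] [IsScalarTower A F K]
    (N : ℕ) (hN : 2 ≤ N) (hK : Module.finrank F K = N)
    (S : Subalgebra A K) (α : Module.Basis (Fin N) A S) (hα : (α ⟨0, by omega⟩ : K) = 1)
    (x : A) (hx0 : x ≠ 0) (hxu : ¬ IsUnit x) (p : A) (hp : Prime p) (hpx : p ∣ x)
    (R : Subalgebra A K)
    (hR : ∀ r : K, r ∈ R ↔ ∃ a : A, ∃ s ∈ S, r = algebraMap A K a + algebraMap A K x * s)
    (𝔭 : Ideal R)
    (h𝔭 : ∀ r : R, r ∈ 𝔭 ↔ ∃ a : A, ∃ s ∈ S,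
      (r : K) = algebraMap A K (p * a) + algebraMap A K x * s)
    (𝔮 : Ideal R) (h𝔮 : 𝔮.IsPrime)
    (hcomap : Ideal.comap (algebraMap A R) 𝔮 = Ideal.span {p}) :
    𝔮 = 𝔭 := by
  have hcoe : ∀ a : A, ((algebraMap A R a : R) : K) = algebraMap A K a := fun a => rfl
  -- p ∈ 𝔮
  have hpQ : algebraMap A R p ∈ 𝔮 := by
    have : p ∈ Ideal.comap (algebraMap A R) 𝔮 := by
      rw [hcomap]; exact Ideal.mem_span_singleton_self p
    exact this
  obtain ⟨t, ht⟩ := hpx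
  -- every element of R of the form x * s with s ∈ S lies in 𝔮
  have hxsQ : ∀ s : K, s ∈ S → ∀ u : R, (u : K) = algebraMap A K x * s → u ∈ 𝔮 := by
    intro s hs u hu
    have hwmem : algebraMap A K x * (algebraMap A K t * (s * s)) ∈ R :=
      (hR _).2 ⟨0, algebraMap A K t * (s * s),
        S.mul_mem (S.algebraMap_mem t) (S.mul_mem hs hs), by rw [map_zero, zero_add]⟩
    set w : R := ⟨_, hwmem⟩
    have hsq : u * u = algebraMap A R p * w := by
      apply Subtype.ext
      push_cast
      rw [hu]
      show (algebraMap A K x * s) * (algebraMap A K x * s)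
        = algebraMap A K p * (algebraMap A K x * (algebraMap A K t * (s * s)))
      rw [ht]
      push_cast [map_mul]
      ring
    rcases h𝔮.mem_or_mem (show u * u ∈ 𝔮 by rw [hsq]; exact Ideal.mul_mem_right _ _ hpQ)
      with h | h <;> exact h
  -- 𝔭 ⊆ 𝔮
  have hPQ : 𝔭 ≤ 𝔮 := by
    intro r hr
    obtain ⟨a, s, hs, hrs⟩ := (h𝔭 r).1 hr
    have hu : r - algebraMap A R (p * a) ∈ 𝔮 := by
      apply hxsQ s hs
      push_cast
      rw [hrs]
      rw [map_mul]
      ring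
    have : algebraMap A R (p * a) ∈ 𝔮 := by
      rw [map_mul]; exact Ideal.mul_mem_right _ _ hpQ
    have := Ideal.add_mem 𝔮 hu this
    simpa using this
  -- 𝔮 ⊆ 𝔭
  refine le_antisymm (fun q hq => ?_) hPQ
  obtain ⟨a, s, hs, hqs⟩ := (hR (q : K)).1 q.2
  have huQ : q - algebraMap A R a ∈ 𝔮 := by
    apply hxsQ s hs
    push_cast
    rw [hqs]
    ring
  have haQ : algebraMap A R a ∈ 𝔮 := by
    have := Ideal.sub_mem 𝔮 hq huQ
    simpa using this
  have hpa : p ∣ a := by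
    have : a ∈ Ideal.comap (algebraMap A R) 𝔮 := haQ
    rw [hcomap, Ideal.mem_span_singleton] at this
    exact this
  obtain ⟨a', ha'⟩ := hpa
  exact (h𝔭 q).2 ⟨a', s, hs, by rw [hqs, ha']⟩
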